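/- The precision meet on gradual types is associative as a partial operation: (G1 ⊓ G2) ⊓ G3 is defined iff G1 ⊓ (G2 ⊓ G3) is defined, and when defined they are equal. Consequently, consistent transitivity of evidence (represented as single gradual types combined by meet) is associative. -/

import Mathlib

inductive GType : Type
  | int
  | bool
  | unk
  | arrow (a b : GType)
deriving DecidableEq

/-- Consistency on gradual types. -/
inductive Consist : GType → GType → Prop
  | unkL (G : GType) : Consist GType.unk G
  | unkR (G : GType) : Consist G GType.unk
  | int : Consist GType.int GType.int
  | bool : Consist GType.bool GType.bool
  | arrow {a a' b b' : GType} : Consist a a' → Consist b b' →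
      Consist (GType.arrow a b) (GType.arrow a' b')

/-- Partial precision meet on gradual types. -/
def gmeet : GType → GType → Option GType
  | g, GType.unk => some g
  | GType.unk, g => some g
  | GType.int, GType.int => some GType.int
  | GType.bool, GType.bool => some GType.bool
  | GType.arrow a b, GType.arrow a' b' =>
      match gmeet a a', gmeet b b' with
      | some x, some y => some (GType.arrow x y)
      | _, _ => none
  | _, _ => none

lemma gmeet_unk_l (g : GType) : gmeet GType.unk g = some g := by cases g <;> rfl

lemma gmeet_unk_r (g : GType) : gmeet g GType.unk = some g := by cases g <;> rfl

lemma gmeet_arrow (a b a' b' : GType) :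
    gmeet (GType.arrow a b) (GType.arrow a' b') =
      match gmeet a a', gmeet b b' with
      | some x, some y => some (GType.arrow x y)
      | _, _ => none := rfl

/-- The meet (consistent transitivity of evidence) is associative as a partial
operation: both sides are defined simultaneously and agree when defined. -/
theorem meet_assoc :
    ∀ G1 G2 G3 : GType,
      (Option.bind (gmeet G1 G2) (fun G => gmeet G G3)) =
      (Option.bind (gmeet G2 G3) (fun G => gmeet G1 G)) := by
  intro G1
  induction G1 with
  | unk =>
      intro G2 G3
      simp only [gmeet_unk_l, Option.bind_some]
      cases gmeet G2 G3 <;> simp [gmeet_unk_l]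
  | int =>
      intro G2 G3
      cases G2 <;> cases G3 <;>
        simp_all [gmeet, gmeet_unk_l, gmeet_unk_r] <;>
        cases h1 : gmeet _ _ <;> cases h2 : gmeet _ _ <;> simp [gmeet]
  | bool =>
      intro G2 G3
      cases G2 <;> cases G3 <;>
        simp_all [gmeet, gmeet_unk_l, gmeet_unk_r] <;>
        cases h1 : gmeet _ _ <;> cases h2 : gmeet _ _ <;> simp [gmeet]
  | arrow a b iha ihb =>
      intro G2 G3
      cases G2 with
      | int => cases G3 <;> simp [gmeet, gmeet_unk_r]
      | bool => cases G3 <;> simp [gmeet, gmeet_unk_r]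
      | unk =>
          simp [gmeet_unk_l, gmeet_unk_r]
      | arrow a2 b2 =>
        cases G3 with
        | int =>
            rw [gmeet_arrow]
            cases h1 : gmeet a a2 <;> cases h2 : gmeet b b2 <;> simp [gmeet]
        | bool =>
            rw [gmeet_arrow]
            cases h1 : gmeet a a2 <;> cases h2 : gmeet b b2 <;> simp [gmeet]
        | unk =>
            simp only [gmeet_unk_r, Option.bind_some]
            cases h : gmeet (GType.arrow a b) (GType.arrow a2 b2) <;>
              simp [h, gmeet_unk_r]
        | arrow a3 b3 =>
          have ha := iha a2 a3
          have hb := ihb b2 b3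
          clear iha ihb
          rw [gmeet_arrow, gmeet_arrow]
          rcases h1 : gmeet a a2 with _ | x1 <;>
          rcases h2 : gmeet b b2 with _ | y1 <;>
          rcases h3 : gmeet a2 a3 with _ | x3 <;>
          rcases h4 : gmeet b2 b3 with _ | y3 <;>
          simp only [h1, h2, h3, h4, Option.bind_none, Option.bind_some] at ha hb ⊢ <;>
          first
          | rfl
          | (rw [gmeet_arrow, gmeet_arrow, ha, hb])
          | ((rw [gmeet_arrow, ha]) <;> rfl)
          | ((rw [gmeet_arrow, ← ha]) <;> rfl)
          | (rw [gmeet_arrow, hb]; cases gmeet x1 a3 <;> rfl)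
          | (rw [gmeet_arrow, ← hb]; cases gmeet a x3 <;> rfl)
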